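/- Let d ≥ 1 and let v : ℝ^d → ℝ be continuously differentiable. Then Σ_{i=1}^d ∫_{[0,1]^{d−1}} ( v(ι_i^0(y))² + v(ι_i^1(y))² ) dy ≤ (2d + √d) · ∫_{[0,1]^d} ( v(x)² + ‖∇v(x)‖² ) dx, where for c ∈ {0,1} the map ι_i^c : ℝ^{d−1} → ℝ^d inserts the value c as the i-th coordinate, and ∇v(x) denotes the (Fréchet) derivative of v at x identified with a vector in ℝ^d. -/

import Mathlib

open MeasureTheory RealInnerProductSpace

/-- The closed unit cube `[0,1]^d` in `ℝ^d`. -/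
def unitCube (d : ℕ) : Set (EuclideanSpace ℝ (Fin d)) :=
  {x | ∀ j, x j ∈ Set.Icc (0 : ℝ) 1}

/-- The map `ι_i^c : ℝ^{d-1} → ℝ^d` inserting the value `c` as the `i`-th
coordinate. -/
noncomputable def insertCoord {n : ℕ} (i : Fin (n + 1)) (c : ℝ)
    (y : EuclideanSpace ℝ (Fin n)) : EuclideanSpace ℝ (Fin (n + 1)) :=
  WithLp.toLp 2 (i.insertNth c (fun j => y j))

namespace CubeTraceAux

lemma isClosed_unitCube (d : ℕ) : IsClosed (unitCube d) := by
  have h : unitCube d = ⋂ j, (fun x : EuclideanSpace ℝ (Fin d) => x j) ⁻¹' Set.Icc (0:ℝ) 1 := by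
    ext x; simp [unitCube]
  rw [h]
  exact isClosed_iInter fun j => isClosed_Icc.preimage <|
    (continuous_apply j).comp (PiLp.continuousLinearEquiv 2 ℝ (fun _ : Fin d => ℝ)).continuous

lemma isCompact_unitCube (d : ℕ) : IsCompact (unitCube d) := by
  refine Metric.isCompact_of_isClosed_isBounded (isClosed_unitCube d) ?_
  refine (Metric.isBounded_closedBall (x := (0 : EuclideanSpace ℝ (Fin d))) (r := Real.sqrt d)).subset ?_
  intro x hx
  rw [Metric.mem_closedBall, dist_zero_right, EuclideanSpace.norm_eq]
  refine Real.sqrt_le_sqrt ?_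
  calc ∑ i, ‖x i‖ ^ 2 ≤ ∑ _i : Fin d, (1:ℝ) := by
          refine Finset.sum_le_sum fun i _ => ?_
          have h1 := (hx i).1; have h2 := (hx i).2
          rw [Real.norm_eq_abs, sq_abs]; nlinarith
    _ = d := by simp

lemma measurableSet_unitCube (d : ℕ) : MeasurableSet (unitCube d) :=
  (isClosed_unitCube d).measurableSet

/-- insertion as a measurable equiv -/
noncomputable def faceEquiv {n : ℕ} (i : Fin (n + 1)) :
    (ℝ × EuclideanSpace ℝ (Fin n)) ≃ᵐ EuclideanSpace ℝ (Fin (n + 1)) :=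
  ((MeasurableEquiv.refl ℝ).prodCongr (MeasurableEquiv.toLp 2 (Fin n → ℝ)).symm).trans
    (((MeasurableEquiv.piFinSuccAbove (fun _ : Fin (n+1) => ℝ) i).symm).trans
      (MeasurableEquiv.toLp 2 (Fin (n + 1) → ℝ)))

lemma faceEquiv_apply {n : ℕ} (i : Fin (n + 1)) (t : ℝ) (y : EuclideanSpace ℝ (Fin n)) :
    faceEquiv i (t, y) = insertCoord i t y := rfl

lemma faceEquiv_measurePreserving {n : ℕ} (i : Fin (n + 1)) :
    MeasurePreserving (faceEquiv (n := n) i) (volume.prod volume) volume := by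
  have h1 : MeasurePreserving
      (fun p : ℝ × EuclideanSpace ℝ (Fin n) =>
        (p.1, (MeasurableEquiv.toLp 2 (Fin n → ℝ)).symm p.2))
      ((volume : Measure ℝ).prod volume) ((volume : Measure ℝ).prod volume) :=
    (MeasurePreserving.id volume).prod (EuclideanSpace.volume_preserving_symm_measurableEquiv_toLp _)
  have h2 := (measurePreserving_piFinSuccAbove (fun _ : Fin (n + 1) => (volume : Measure ℝ)) i).symm
  simp only [← volume_pi] at h2
  have h3 := (EuclideanSpace.volume_preserving_symm_measurableEquiv_toLp (Fin (n + 1))).symm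
  exact (h3.comp h2).comp h1

lemma faceEquiv_preimage {n : ℕ} (i : Fin (n + 1)) :
    (faceEquiv (n := n) i) ⁻¹' unitCube (n + 1) = Set.Icc (0:ℝ) 1 ×ˢ unitCube n := by
  ext ⟨t, y⟩
  simp only [Set.mem_preimage, faceEquiv_apply, unitCube, Set.mem_setOf_eq, Set.mem_prod,
    insertCoord, PiLp.toLp_apply, i.forall_iff_succAbove, Fin.insertNth_apply_same, Fin.insertNth_apply_succAbove]

/-- Fubini-type transfer of integrals from the cube to iterated integrals. -/
lemma cube_transfer {n : ℕ} (i : Fin (n + 1)) (φ : EuclideanSpace ℝ (Fin (n + 1)) → ℝ)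
    (hφ : IntegrableOn φ (unitCube (n + 1))) :
    (∫ x in unitCube (n + 1), φ x
        = ∫ y in unitCube n, ∫ t in Set.Icc (0:ℝ) 1, φ (insertCoord i t y)) ∧
      IntegrableOn (fun y => ∫ t in Set.Icc (0:ℝ) 1, φ (insertCoord i t y)) (unitCube n) := by
  have hmp : MeasurePreserving (faceEquiv (n := n) i)
      (((volume : Measure ℝ).restrict (Set.Icc 0 1)).prod (volume.restrict (unitCube n)))
      (volume.restrict (unitCube (n + 1))) := by
    rw [Measure.prod_restrict, ← faceEquiv_preimage i]
    exact (faceEquiv_measurePreserving i).restrict_preimage_emb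
      (faceEquiv i).measurableEmbedding _
  have hint : Integrable (fun p : ℝ × EuclideanSpace ℝ (Fin n) => φ (faceEquiv i p))
      (((volume : Measure ℝ).restrict (Set.Icc 0 1)).prod (volume.restrict (unitCube n))) :=
    (hmp.integrable_comp_emb (faceEquiv i).measurableEmbedding).2 hφ
  constructor
  · rw [← hmp.integral_comp (faceEquiv i).measurableEmbedding φ]
    rw [integral_prod _ hint]
    exact integral_integral_swap (f := fun t y => φ (faceEquiv i (t, y))) hint
  · exact hint.integral_prod_right

lemma continuous_insertCoord_pair {n : ℕ} (i : Fin (n + 1)) :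
    Continuous (fun p : ℝ × EuclideanSpace ℝ (Fin n) => insertCoord i p.1 p.2) := by
  let L : (ℝ × EuclideanSpace ℝ (Fin n)) →ₗ[ℝ] EuclideanSpace ℝ (Fin (n + 1)) :=
    { toFun := fun p => insertCoord i p.1 p.2
      map_add' := by
        intro p q
        ext j
        refine i.succAboveCases ?_ (fun k => ?_) j <;>
          simp [insertCoord, Fin.insertNth_apply_same, Fin.insertNth_apply_succAbove,
            PiLp.add_apply]
      map_smul' := by
        intro c p
        ext j
        refine i.succAboveCases ?_ (fun k => ?_) j <;>
          simp [insertCoord, Fin.insertNth_apply_same, Fin.insertNth_apply_succAbove,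
            PiLp.smul_apply, smul_eq_mul] }
  exact L.continuous_of_finiteDimensional

lemma continuous_insertCoord {n : ℕ} (i : Fin (n + 1)) (c : ℝ) :
    Continuous (fun y : EuclideanSpace ℝ (Fin n) => insertCoord i c y) :=
  (continuous_insertCoord_pair i).comp (Continuous.prodMk_right c)

lemma insertCoord_decomp {n : ℕ} (i : Fin (n + 1)) (t : ℝ) (y : EuclideanSpace ℝ (Fin n)) :
    insertCoord i t y = insertCoord i 0 y + t • EuclideanSpace.single i (1:ℝ) := by
  ext j
  refine i.succAboveCases ?_ (fun k => ?_) j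
  · simp [insertCoord, Fin.insertNth_apply_same, PiLp.add_apply, PiLp.smul_apply,
      EuclideanSpace.single_apply]
  · simp [insertCoord, Fin.insertNth_apply_succAbove, PiLp.add_apply, PiLp.smul_apply,
      EuclideanSpace.single_apply, (i.succAbove_ne k)]

/-- The one-dimensional trace estimate along a segment. -/
lemma oneDim {g dg : ℝ → ℝ} (hg : ∀ t, HasDerivAt g (dg t) t) (hdg : Continuous dg) :
    g 0 ^ 2 + g 1 ^ 2 ≤ ∫ t in Set.Icc (0:ℝ) 1, (2 * g t ^ 2 + |2 * g t * dg t|) := by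
  have hgc : Continuous g := by
    have : Differentiable ℝ g := fun t => (hg t).differentiableAt
    exact this.continuous
  set D : ℝ → ℝ := fun t => 2 * g t * dg t with hD_def
  have hD : Continuous D := by fun_prop
  have hh : ∀ t, HasDerivAt (fun s => g s ^ 2) (D t) t := by
    intro t
    have := (hg t).pow 2
    simpa [hD_def, pow_one, mul_comm, mul_assoc, Pi.pow_def] using this
  have ftc : ∀ a b : ℝ, ∫ s in a..b, D s = g b ^ 2 - g a ^ 2 := fun a b =>
    intervalIntegral.integral_eq_sub_of_hasDerivAt (fun s _ => hh s) (hD.intervalIntegrable a b)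
  set C : ℝ := ∫ s in (0:ℝ)..1, |D s| with hC_def
  have key : ∀ t ∈ Set.Icc (0:ℝ) 1, g 0 ^ 2 + g 1 ^ 2 ≤ 2 * g t ^ 2 + C := by
    intro t ht
    have e1 := ftc 0 t
    have e2 := ftc t 1
    have a1 : |∫ s in (0:ℝ)..t, D s| ≤ ∫ s in (0:ℝ)..t, |D s| :=
      intervalIntegral.abs_integral_le_integral_abs ht.1
    have a2 : |∫ s in t..(1:ℝ), D s| ≤ ∫ s in t..(1:ℝ), |D s| :=
      intervalIntegral.abs_integral_le_integral_abs ht.2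
    have split : (∫ s in (0:ℝ)..t, |D s|) + ∫ s in t..(1:ℝ), |D s| = C :=
      intervalIntegral.integral_add_adjacent_intervals
        ((hD.abs).intervalIntegrable 0 t) ((hD.abs).intervalIntegrable t 1)
    have n1 := neg_abs_le (∫ s in (0:ℝ)..t, D s)
    have n2 := le_abs_self (∫ s in t..(1:ℝ), D s)
    linarith
  have hmeas1 : volume.real (Set.Icc (0:ℝ) 1) = 1 := by
    simp [Real.volume_real_Icc]
  have habs : ∀ t, |D t| = |2 * g t * dg t| := fun t => rfl
  have hCi : C = ∫ t in Set.Icc (0:ℝ) 1, |D t| := by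
    rw [hC_def, intervalIntegral.integral_of_le (zero_le_one), integral_Icc_eq_integral_Ioc]
  have int1 : IntegrableOn (fun t => 2 * g t ^ 2) (Set.Icc (0:ℝ) 1) := by
    apply Continuous.integrableOn_Icc; fun_prop
  have int2 : IntegrableOn (fun t => |D t|) (Set.Icc (0:ℝ) 1) := by
    apply Continuous.integrableOn_Icc; fun_prop
  calc g 0 ^ 2 + g 1 ^ 2 = ∫ _t in Set.Icc (0:ℝ) 1, (g 0 ^ 2 + g 1 ^ 2) := by
        rw [setIntegral_const, hmeas1, one_smul]
    _ ≤ ∫ t in Set.Icc (0:ℝ) 1, (2 * g t ^ 2 + C) := by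
        refine setIntegral_mono_on (integrableOn_const (by simp [Real.volume_Icc])) (int1.add (integrableOn_const (by simp [Real.volume_Icc])))
          measurableSet_Icc key <;>
          exact Or.inr (by simp [Real.volume_Icc])
    _ = (∫ t in Set.Icc (0:ℝ) 1, 2 * g t ^ 2) + C := by
        rw [integral_add int1 (integrableOn_const (by simp [Real.volume_Icc]))]
        rw [setIntegral_const, hmeas1, one_smul]
    _ = (∫ t in Set.Icc (0:ℝ) 1, 2 * g t ^ 2) + ∫ t in Set.Icc (0:ℝ) 1, |2 * g t * dg t| := by
        rw [hCi]
    _ = ∫ t in Set.Icc (0:ℝ) 1, (2 * g t ^ 2 + |2 * g t * dg t|) := (integral_add int1 int2).symm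

end CubeTraceAux

/-- Lemma 3 of the paper on the parametric domain (the unit cube): the trace
inequality `∫_{∂[0,1]^d} v² ≤ (2d + √d) ∫_{[0,1]^d} (v² + ‖∇v‖²) dx`, the
boundary integral being written as the sum over the `2d` faces of the cube. -/
theorem unit_cube_trace_inequality
    {n : ℕ} (v : EuclideanSpace ℝ (Fin (n + 1)) → ℝ) (hv : ContDiff ℝ 1 v) :
    ∑ i : Fin (n + 1), ∫ y in unitCube n,
        (v (insertCoord i 0 y) ^ 2 + v (insertCoord i 1 y) ^ 2) ≤
      (2 * (n + 1 : ℝ) + Real.sqrt (n + 1)) *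
        ∫ x in unitCube (n + 1), (v x ^ 2 + ‖gradient v x‖ ^ 2) := by
  classical
  open CubeTraceAux in
  -- continuity facts
  have hvc : Continuous v := hv.continuous
  have hfd : Continuous (fderiv ℝ v) := hv.continuous_fderiv one_ne_zero
  have hdiff : Differentiable ℝ v := hv.differentiable one_ne_zero
  set φ : Fin (n + 1) → EuclideanSpace ℝ (Fin (n + 1)) → ℝ :=
    fun i x => 2 * v x ^ 2 + |2 * v x * fderiv ℝ v x (EuclideanSpace.single i 1)| with hφ_def
  have hφc : ∀ i, Continuous (φ i) := by
    intro i
    apply Continuous.add (by fun_prop)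
    apply Continuous.abs
    exact (continuous_const.mul hvc).mul (hfd.clm_apply continuous_const)
  have hφint : ∀ i, IntegrableOn (φ i) (unitCube (n + 1)) := fun i =>
    (hφc i).continuousOn.integrableOn_compact (isCompact_unitCube (n + 1))
  -- gradient facts
  have hgradc : Continuous (gradient v) := by
    have : gradient v = fun x => (InnerProductSpace.toDual ℝ _).symm (fderiv ℝ v x) := rfl
    rw [this]
    exact (InnerProductSpace.toDual ℝ _).symm.continuous.comp hfd
  have hgrad_apply : ∀ x (i : Fin (n + 1)),
      fderiv ℝ v x (EuclideanSpace.single i 1) = gradient v x i := by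
    intro x i
    have h1 : fderiv ℝ v x (EuclideanSpace.single i 1) = ⟪gradient v x, EuclideanSpace.single i 1⟫ := by
      rw [gradient]
      simp [InnerProductSpace.toDual_symm_apply]
    rw [h1]
    rw [EuclideanSpace.inner_single_right]; simp
  set ψ : EuclideanSpace ℝ (Fin (n + 1)) → ℝ := fun x => v x ^ 2 + ‖gradient v x‖ ^ 2 with hψ_def
  have hψc : Continuous ψ := by
    apply Continuous.add (by fun_prop)
    exact (hgradc.norm).pow 2
  have hψint : IntegrableOn ψ (unitCube (n + 1)) :=
    hψc.continuousOn.integrableOn_compact (isCompact_unitCube (n + 1))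
  -- step 1: per-face estimates
  have step1 : ∀ i : Fin (n + 1),
      (∫ y in unitCube n, (v (insertCoord i 0 y) ^ 2 + v (insertCoord i 1 y) ^ 2))
        ≤ ∫ x in unitCube (n + 1), φ i x := by
    intro i
    obtain ⟨heq, hint⟩ := cube_transfer i (φ i) (hφint i)
    rw [heq]
    have hlhs : IntegrableOn
        (fun y => v (insertCoord i 0 y) ^ 2 + v (insertCoord i 1 y) ^ 2) (unitCube n) := by
      apply ContinuousOn.integrableOn_compact (isCompact_unitCube n)
      apply Continuous.continuousOn
      exact ((hvc.comp (continuous_insertCoord i 0)).pow 2).add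
        ((hvc.comp (continuous_insertCoord i 1)).pow 2)
    refine setIntegral_mono_on hlhs hint (measurableSet_unitCube n) (fun y _ => ?_)
    -- one-dimensional estimate
    set g : ℝ → ℝ := fun t => v (insertCoord i t y) with hg_def
    set dg : ℝ → ℝ := fun t => fderiv ℝ v (insertCoord i t y) (EuclideanSpace.single i 1)
      with hdg_def
    have hL : ∀ t : ℝ, HasDerivAt (fun s => insertCoord i s y) (EuclideanSpace.single i 1) t := by
      intro t
      have hrw : (fun s : ℝ => insertCoord i s y)
          = fun s => insertCoord i 0 y + s • EuclideanSpace.single i (1:ℝ) :=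
        funext fun s => insertCoord_decomp i s y
      rw [hrw]
      simpa using (((hasDerivAt_id t).smul_const (EuclideanSpace.single i (1:ℝ))).const_add
        (insertCoord i 0 y))
    have hg : ∀ t, HasDerivAt g (dg t) t := fun t =>
      ((hdiff _).hasFDerivAt.comp_hasDerivAt t (hL t))
    have hdgc : Continuous dg := by
      have : Continuous fun t : ℝ => insertCoord i t y :=
        (continuous_insertCoord_pair i).comp (continuous_id.prodMk continuous_const)
      exact ((hfd.comp this).clm_apply continuous_const)
    exact oneDim hg hdgc
  -- step 2: sum up and bound pointwise
  have hsum_int : IntegrableOn (fun x => ∑ i : Fin (n + 1), φ i x) (unitCube (n + 1)) :=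
    integrable_finset_sum _ (fun i _ => hφint i)
  have pointwise : ∀ x, (∑ i : Fin (n + 1), φ i x)
      ≤ (2 * (n + 1 : ℝ) + Real.sqrt (n + 1)) * ψ x := by
    intro x
    set a : ℝ := v x
    set G : EuclideanSpace ℝ (Fin (n + 1)) := gradient v x
    have hsum_eq : (∑ i : Fin (n + 1), φ i x)
        = 2 * (n + 1 : ℝ) * a ^ 2 + 2 * |a| * ∑ i : Fin (n + 1), |G i| := by
      rw [hφ_def]
      simp only [hgrad_apply x]
      have h1 : ∀ i : Fin (n + 1), 2 * v x ^ 2 + |2 * v x * G i|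
          = 2 * a ^ 2 + 2 * |a| * |G i| := fun i => by
        rw [abs_mul, abs_mul, abs_two]
      rw [Finset.sum_congr rfl fun i _ => h1 i]
      rw [Finset.sum_add_distrib, Finset.sum_const, Finset.card_univ, Fintype.card_fin,
        ← Finset.mul_sum]
      push_cast [nsmul_eq_mul]
      ring
    have hnormsq : ‖G‖ ^ 2 = ∑ i : Fin (n + 1), (G i) ^ 2 := by
      rw [EuclideanSpace.norm_eq, Real.sq_sqrt (by positivity)]
      refine Finset.sum_congr rfl fun i _ => ?_
      rw [Real.norm_eq_abs, sq_abs]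
    have hcs : (∑ i : Fin (n + 1), |G i|) ^ 2 ≤ (n + 1 : ℝ) * ‖G‖ ^ 2 := by
      have := sq_sum_le_card_mul_sum_sq (s := (Finset.univ : Finset (Fin (n+1))))
        (f := fun i => |G i|)
      simp only [Finset.card_univ, Fintype.card_fin, sq_abs] at this
      rw [hnormsq]
      exact_mod_cast this
    have hS : (∑ i : Fin (n + 1), |G i|) ≤ Real.sqrt (n + 1) * ‖G‖ := by
      have h0 : (0:ℝ) ≤ ∑ i : Fin (n + 1), |G i| := Finset.sum_nonneg fun i _ => abs_nonneg _
      have := Real.sqrt_le_sqrt hcs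
      rwa [Real.sqrt_sq h0, Real.sqrt_mul (by positivity), Real.sqrt_sq (norm_nonneg _)] at this
    have hsqrt0 : (0:ℝ) ≤ Real.sqrt (n + 1) := Real.sqrt_nonneg _
    have habs2 : |a| ^ 2 = a ^ 2 := sq_abs a
    have hG0 : (0:ℝ) ≤ ‖G‖ := norm_nonneg _
    have ha0 : (0:ℝ) ≤ |a| := abs_nonneg _
    have key2 : 2 * |a| * (∑ i : Fin (n + 1), |G i|)
        ≤ Real.sqrt (n + 1) * (a ^ 2 + ‖G‖ ^ 2) := by
      have h1 : 2 * |a| * (∑ i : Fin (n + 1), |G i|)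
          ≤ 2 * |a| * (Real.sqrt (n + 1) * ‖G‖) := by
        apply mul_le_mul_of_nonneg_left hS (by positivity)
      refine h1.trans ?_
      nlinarith [sq_nonneg (|a| - ‖G‖), hsqrt0, habs2]
    have hψx : ψ x = a ^ 2 + ‖G‖ ^ 2 := rfl
    rw [hsum_eq, hψx]
    have hn0 : (0:ℝ) ≤ (n + 1 : ℝ) := by positivity
    nlinarith [key2, mul_nonneg hn0 (sq_nonneg ‖G‖)]
  calc ∑ i : Fin (n + 1), ∫ y in unitCube n,
        (v (insertCoord i 0 y) ^ 2 + v (insertCoord i 1 y) ^ 2)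
      ≤ ∑ i : Fin (n + 1), ∫ x in unitCube (n + 1), φ i x :=
        Finset.sum_le_sum fun i _ => step1 i
    _ = ∫ x in unitCube (n + 1), ∑ i : Fin (n + 1), φ i x :=
        (integral_finset_sum _ (fun i _ => hφint i)).symm
    _ ≤ ∫ x in unitCube (n + 1), (2 * (n + 1 : ℝ) + Real.sqrt (n + 1)) * ψ x := by
        refine setIntegral_mono_on hsum_int (hψint.const_mul _) (measurableSet_unitCube _)
          (fun x _ => pointwise x)
    _ = (2 * (n + 1 : ℝ) + Real.sqrt (n + 1)) *
          ∫ x in unitCube (n + 1), (v x ^ 2 + ‖gradient v x‖ ^ 2) := by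
        rw [integral_const_mul]
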